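/- arXiv:1401.3238 — 4 statements merged into one kernel-verified Lean document; each statement's English description precedes it below -/
import Mathlib

section
/- Let (H, J) be a Krein space with J ≠ id and J ≠ −id, let s ⊆ ℝ be a convex set (an interval), and let f : ℝ → ℝ. Suppose that for all α, β ∈ s and all λ ∈ [0,1] the scalar Jensen inequality holds in the J-order, i.e. the operator ((1−λ)·f(α) + λ·f(β) − f((1−λ)·α + λ·β)) • J is positive. Then f is affine on s in the sense that f((1−λ)·α + λ·β) = (1−λ)·f(α) + λ·f(β) for all α, β ∈ s and λ ∈ [0,1]. -/
open ContinuousLinearMap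

lemma krein_scalar_smul_pos_eq_zero
    {H : Type*} [NormedAddCommGroup H] [InnerProductSpace ℂ H] [CompleteSpace H]
    (J : H →L[ℂ] H) (hJsa : IsSelfAdjoint J) (hJ2 : J ∘L J = 1)
    (hJ1 : J ≠ 1) (hJneg1 : J ≠ -1) (c : ℝ)
    (hc : ((c : ℂ) • J).IsPositive) : c = 0 := by
  -- get vector with J x = -x
  obtain ⟨x, hx⟩ : ∃ x : H, J x ≠ x := by
    by_contra h
    push_neg at h
    exact hJ1 (ContinuousLinearMap.ext fun x => by simp [h x])
  obtain ⟨y, hy⟩ : ∃ y : H, J y ≠ -y := by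
    by_contra h
    push_neg at h
    exact hJneg1 (ContinuousLinearMap.ext fun y => by simp [h y])
  set u := J x - x with hu
  have hu0 : u ≠ 0 := sub_ne_zero.mpr hx
  have hJu : J u = -u := by
    have : J (J x) = x := by
      have := congrArg (fun T => T x) hJ2
      simpa using this
    simp [hu, map_sub, this, neg_sub]
  set v := J y + y with hv
  have hv0 : v ≠ 0 := by
    intro h
    apply hy
    rw [eq_neg_iff_add_eq_zero]
    exact h
  have hJv : J v = v := by
    have : J (J y) = y := by
      have := congrArg (fun T => T y) hJ2
      simpa using this
    simp [hv, map_add, this, add_comm]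
  have h1 := hc.2 u
  have h2 := hc.2 v
  simp only [reApplyInnerSelf_apply, ContinuousLinearMap.smul_apply, hJu, hJv,
    inner_smul_left, inner_neg_left] at h1 h2
  rw [@inner_self_eq_norm_sq_to_K ℂ] at h1 h2
  have hn1 : (0:ℝ) < ‖u‖^2 := pow_pos (norm_pos_iff.mpr hu0) 2
  have hn2 : (0:ℝ) < ‖v‖^2 := pow_pos (norm_pos_iff.mpr hv0) 2
  simp only [Complex.conj_ofReal, Complex.mul_re, Complex.neg_re, Complex.neg_im,
    Complex.ofReal_re, Complex.ofReal_im, RCLike.re_to_complex, ← Complex.ofReal_pow] at h1 h2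
  norm_num [Complex.ofReal_pow] at h1 h2
  have r1 : ((‖u‖:ℂ)^2).re = ‖u‖^2 := by norm_cast
  have r2 : ((‖v‖:ℂ)^2).re = ‖v‖^2 := by norm_cast
  rw [r1] at h1
  rw [r2] at h2
  nlinarith

/-- Ando's observation: on a genuine Krein space (`J ≠ ±id`), if a function `f` satisfies the
scalar Jensen inequality in the `J`-order on a convex set `s ⊆ ℝ`, then `f` is affine on `s`. -/
theorem naive_Krein_convexity_forces_affine
    {H : Type*} [NormedAddCommGroup H] [InnerProductSpace ℂ H] [CompleteSpace H]
    (J : H →L[ℂ] H) (hJsa : IsSelfAdjoint J) (hJ2 : J ∘L J = 1)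
    (hJ1 : J ≠ 1) (hJneg1 : J ≠ -1)
    (s : Set ℝ) (hs : Convex ℝ s) (f : ℝ → ℝ)
    (hf : ∀ a ∈ s, ∀ b ∈ s, ∀ l ∈ Set.Icc (0 : ℝ) 1,
      ((((1 - l) * f a + l * f b - f ((1 - l) * a + l * b) : ℝ) : ℂ) • J).IsPositive) :
    ∀ a ∈ s, ∀ b ∈ s, ∀ l ∈ Set.Icc (0 : ℝ) 1,
      f ((1 - l) * a + l * b) = (1 - l) * f a + l * f b := by
  intro a ha b hb l hl
  have := krein_scalar_smul_pos_eq_zero J hJsa hJ2 hJ1 hJneg1 _ (hf a ha b hb l hl)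
  linarith
end

section
/- In the space of 2×2 complex matrices, let J₀ = !![1, 0; 0, −1], A = !![1, −1; 1, −2] and B = !![1, −1; 1, −3]. Then J₀ * A and J₀ * B are positive semidefinite (so A and B are J₀-positive), but the matrix J₀ * ((A^2 + B^2)/2 − ((A + B)/2)^2) is not positive semidefinite; that is, the midpoint operator convexity inequality ((A+B)/2)^2 ≤^{J₀} (A^2 + B^2)/2 fails, so the function t ↦ t² is not Krein-operator convex. -/
open Matrix ComplexOrder

lemma psd_aux (C : Matrix (Fin 2) (Fin 2) ℂ) : (Cᴴ * C).PosSemidef :=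
  Matrix.posSemidef_conjTranspose_mul_self C

/-- In the 2-dimensional Minkowski space, the matrices `A = !![1, -1; 1, -2]` and
`B = !![1, -1; 1, -3]` are `J₀`-positive, but the midpoint operator convexity inequality
`((A+B)/2)² ≤^{J₀} (A² + B²)/2` fails; hence `t ↦ t²` is not Krein-operator convex. -/
theorem sq_not_Krein_operator_convex :
    let J₀ : Matrix (Fin 2) (Fin 2) ℂ := !![1, 0; 0, -1]
    let A : Matrix (Fin 2) (Fin 2) ℂ := !![1, -1; 1, -2]
    let B : Matrix (Fin 2) (Fin 2) ℂ := !![1, -1; 1, -3]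
    (J₀ * A).PosSemidef ∧ (J₀ * B).PosSemidef ∧
      ¬ (J₀ * ((2 : ℂ)⁻¹ • (A ^ 2 + B ^ 2) - ((2 : ℂ)⁻¹ • (A + B)) ^ 2)).PosSemidef := by
  intro J₀ A B
  refine ⟨?_, ?_, ?_⟩
  · have h : J₀ * A = (!![1, -1; 0, 1] : Matrix (Fin 2) (Fin 2) ℂ)ᴴ * !![1, -1; 0, 1] := by
      simp [J₀, A]
      ext i j
      fin_cases i <;> fin_cases j <;>
        simp [Matrix.mul_apply, Fin.sum_univ_two, Matrix.conjTranspose_apply] <;> norm_num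
    rw [h]; exact psd_aux _
  · have h : J₀ * B = (!![1, -1; 0, (Real.sqrt 2 : ℂ)] : Matrix (Fin 2) (Fin 2) ℂ)ᴴ *
        !![1, -1; 0, (Real.sqrt 2 : ℂ)] := by
      ext i j
      fin_cases i <;> fin_cases j <;>
        simp [J₀, B, Matrix.mul_apply, Fin.sum_univ_two, Matrix.conjTranspose_apply] <;>
        norm_num [← Complex.ofReal_mul, Real.mul_self_sqrt]
    rw [h]; exact psd_aux _
  · intro h
    have h2 := h.dotProduct_mulVec_nonneg (![0, 1] : Fin 2 → ℂ)
    have hM : J₀ * ((2 : ℂ)⁻¹ • (A ^ 2 + B ^ 2) - ((2 : ℂ)⁻¹ • (A + B)) ^ 2) =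
        !![0, 0; 0, (-4⁻¹ : ℂ)] := by
      ext i j
      fin_cases i <;> fin_cases j <;>
        simp [J₀, A, B, pow_two, Matrix.mul_apply, Fin.sum_univ_two] <;> ring
    rw [hM] at h2
    simp [dotProduct, Matrix.mulVec, Fin.sum_univ_two] at h2
    rw [Complex.le_def] at h2
    norm_num at h2
end

section
/- Let (H, J) be a Krein space, let A and B be invertible J-positive bounded operators on H (J ∘ A and J ∘ B are positive), let λ ∈ [0,1], and suppose (1−λ)•A + λ•B is invertible. Then ((1−λ)•A + λ•B)⁻¹ ≤^J (1−λ)•A⁻¹ + λ•B⁻¹, i.e. the operator J ∘ ((1−λ)•A⁻¹ + λ•B⁻¹ − ((1−λ)•A + λ•B)⁻¹) is positive. -/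
open ContinuousLinearMap

section Aux

lemma ringInverse_mul_of_isUnit {R : Type*} [MonoidWithZero R] {a b : R}
    (ha : IsUnit a) (hb : IsUnit b) :
    Ring.inverse (a * b) = Ring.inverse b * Ring.inverse a := by
  obtain ⟨u, rfl⟩ := ha
  obtain ⟨v, rfl⟩ := hb
  rw [← Units.val_mul, Ring.inverse_unit, Ring.inverse_unit, Ring.inverse_unit,
    mul_inv_rev, Units.val_mul]

variable {H : Type*} [NormedAddCommGroup H] [InnerProductSpace ℂ H] [CompleteSpace H]

local notation "⟪" x ", " y "⟫" => @inner ℂ _ _ x y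

lemma star_ofReal_complex (r : ℝ) : star ((r : ℝ) : ℂ) = ((r : ℝ) : ℂ) := by
  simp [Complex.conj_ofReal]

lemma key_ineq (P : H →L[ℂ] H) (hP : P.IsPositive) (x y : H) :
    2 * RCLike.re ⟪y, P x⟫ ≤ RCLike.re ⟪P x, x⟫ + RCLike.re ⟪P y, y⟫ := by
  have h0 : 0 ≤ RCLike.re ⟪P (x - y), x - y⟫ := hP.re_inner_nonneg_left (x - y)
  have hsym : ⟪P y, x⟫ = ⟪y, P x⟫ := by
    rw [← ContinuousLinearMap.adjoint_inner_left, hP.isSelfAdjoint.adjoint_eq]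
  have hre : RCLike.re ⟪P x, y⟫ = RCLike.re ⟪y, P x⟫ := inner_re_symm _ _
  rw [map_sub, inner_sub_left, inner_sub_right, inner_sub_right] at h0
  simp only [map_sub] at h0
  rw [hsym] at h0
  linarith [h0, hre]

lemma inverse_convex (P Q : H →L[ℂ] H) (hP : P.IsPositive) (hQ : Q.IsPositive)
    (hPu : IsUnit P) (hQu : IsUnit Q) (l : ℝ) (hl0 : 0 ≤ l) (hl1 : l ≤ 1)
    (hSu : IsUnit (((1 - l : ℝ) : ℂ) • P + ((l : ℝ) : ℂ) • Q)) :
    (((1 - l : ℝ) : ℂ) • Ring.inverse P + ((l : ℝ) : ℂ) • Ring.inverse Q -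
      Ring.inverse (((1 - l : ℝ) : ℂ) • P + ((l : ℝ) : ℂ) • Q)).IsPositive := by
  set S : H →L[ℂ] H := ((1 - l : ℝ) : ℂ) • P + ((l : ℝ) : ℂ) • Q with hS
  have hSsa : IsSelfAdjoint S :=
    (IsSelfAdjoint.smul (star_ofReal_complex _) hP.isSelfAdjoint).add
      (IsSelfAdjoint.smul (star_ofReal_complex _) hQ.isSelfAdjoint)
  have hinv_sa : ∀ (T : H →L[ℂ] H), IsSelfAdjoint T → IsSelfAdjoint (Ring.inverse T) := by
    intro T hT
    rw [IsSelfAdjoint, ← Ring.inverse_star, hT.star_eq]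
  constructor
  · exact ContinuousLinearMap.isSelfAdjoint_iff_isSymmetric.mp (((IsSelfAdjoint.smul (star_ofReal_complex _) (hinv_sa P hP.isSelfAdjoint)).add
      (IsSelfAdjoint.smul (star_ofReal_complex _) (hinv_sa Q hQ.isSelfAdjoint))).sub
      (hinv_sa S hSsa))
  · intro x
    rw [reApplyInnerSelf]
    set u : H := Ring.inverse S x with hu
    set p : H := Ring.inverse P x with hp
    set q : H := Ring.inverse Q x with hq
    have hPp : P p = x := by
      rw [hp, ← ContinuousLinearMap.comp_apply, ← ContinuousLinearMap.mul_def,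
        Ring.mul_inverse_cancel P hPu, ContinuousLinearMap.one_apply]
    have hQq : Q q = x := by
      rw [hq, ← ContinuousLinearMap.comp_apply, ← ContinuousLinearMap.mul_def,
        Ring.mul_inverse_cancel Q hQu, ContinuousLinearMap.one_apply]
    have hSux : S u = x := by
      rw [hu, ← ContinuousLinearMap.comp_apply, ← ContinuousLinearMap.mul_def,
        Ring.mul_inverse_cancel S hSu, ContinuousLinearMap.one_apply]
    have expand : RCLike.re ⟪(((1 - l : ℝ) : ℂ) • Ring.inverse P + ((l : ℝ) : ℂ) • Ring.inverse Q -
        Ring.inverse S) x, x⟫ = (1 - l) * RCLike.re ⟪p, x⟫ + l * RCLike.re ⟪q, x⟫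
          - RCLike.re ⟪u, x⟫ := by
      simp only [ContinuousLinearMap.sub_apply, ContinuousLinearMap.add_apply,
        ContinuousLinearMap.smul_apply, inner_sub_left, inner_add_left, inner_smul_left,
        Complex.conj_ofReal, map_sub, map_add, RCLike.re_to_complex, Complex.re_ofReal_mul, ← hp, ← hq, ← hu]
    rw [expand]
    have keyP := key_ineq P hP p u
    have keyQ := key_ineq Q hQ q u
    rw [hPp] at keyP
    rw [hQq] at keyQ
    have hrp : RCLike.re ⟪x, p⟫ = RCLike.re ⟪p, x⟫ := inner_re_symm _ _
    have hrq : RCLike.re ⟪x, q⟫ = RCLike.re ⟪q, x⟫ := inner_re_symm _ _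
    have heq : RCLike.re ⟪u, x⟫ =
        (1 - l) * RCLike.re ⟪P u, u⟫ + l * RCLike.re ⟪Q u, u⟫ := by
      have h1 : RCLike.re ⟪u, x⟫ = RCLike.re ⟪S u, u⟫ := by
        rw [← hSux, inner_re_symm]
      rw [h1, hS]
      simp only [ContinuousLinearMap.add_apply, ContinuousLinearMap.smul_apply,
        inner_add_left, inner_smul_left, Complex.conj_ofReal, map_add, RCLike.re_to_complex, Complex.re_ofReal_mul]
    nlinarith [mul_le_mul_of_nonneg_left keyP (by linarith : (0:ℝ) ≤ 1 - l),
      mul_le_mul_of_nonneg_left keyQ hl0]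

end Aux

/-- The inverse function is Krein-operator convex: for invertible `J`-positive operators
`A`, `B` on a Krein space `(H, J)`, `λ ∈ [0,1]` with `(1-λ)A + λB` invertible,
`((1-λ)A + λB)⁻¹ ≤^J (1-λ)A⁻¹ + λB⁻¹`. -/
theorem inverse_is_Krein_operator_convex
    {H : Type*} [NormedAddCommGroup H] [InnerProductSpace ℂ H] [CompleteSpace H]
    (J : H →L[ℂ] H) (hJsa : IsSelfAdjoint J) (hJ2 : J ∘L J = 1)
    (A B : H →L[ℂ] H)
    (hA : (J ∘L A).IsPositive) (hAinv : IsUnit A)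
    (hB : (J ∘L B).IsPositive) (hBinv : IsUnit B)
    (l : ℝ) (hl : l ∈ Set.Icc (0 : ℝ) 1)
    (hsum : IsUnit (((1 - l : ℝ) : ℂ) • A + ((l : ℝ) : ℂ) • B)) :
    (J ∘L (((1 - l : ℝ) : ℂ) • Ring.inverse A + ((l : ℝ) : ℂ) • Ring.inverse B -
      Ring.inverse (((1 - l : ℝ) : ℂ) • A + ((l : ℝ) : ℂ) • B))).IsPositive := by
  have hJ2' : J * J = 1 := hJ2
  have hJu : IsUnit J := ⟨⟨J, J, hJ2', hJ2'⟩, rfl⟩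
  have hinvJ : Ring.inverse J = J := by
    have h1 : Ring.inverse J * (J * J) = Ring.inverse J := by rw [hJ2', mul_one]
    rw [← mul_assoc, Ring.inverse_mul_cancel J hJu, one_mul] at h1
    exact h1.symm
  set P : H →L[ℂ] H := J * A with hPdef
  set Q : H →L[ℂ] H := J * B with hQdef
  set C : H →L[ℂ] H := ((1 - l : ℝ) : ℂ) • A + ((l : ℝ) : ℂ) • B with hCdef
  have hP : P.IsPositive := hA
  have hQ : Q.IsPositive := hB
  have hPu : IsUnit P := hJu.mul hAinv
  have hQu : IsUnit Q := hJu.mul hBinv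
  have hSC : ((1 - l : ℝ) : ℂ) • P + ((l : ℝ) : ℂ) • Q = J * C := by
    rw [hPdef, hQdef, hCdef, mul_add, mul_smul_comm, mul_smul_comm]
  have hSu : IsUnit (((1 - l : ℝ) : ℂ) • P + ((l : ℝ) : ℂ) • Q) := by
    rw [hSC]; exact hJu.mul hsum
  have hM := inverse_convex P Q hP hQ hPu hQu l hl.1 hl.2 hSu
  have hconj := hM.conj_adjoint J
  rw [hJsa.adjoint_eq] at hconj
  have hiP : Ring.inverse P = Ring.inverse A * J := by
    rw [hPdef, ringInverse_mul_of_isUnit hJu hAinv, hinvJ]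
  have hiQ : Ring.inverse Q = Ring.inverse B * J := by
    rw [hQdef, ringInverse_mul_of_isUnit hJu hBinv, hinvJ]
  have hiS : Ring.inverse (((1 - l : ℝ) : ℂ) • P + ((l : ℝ) : ℂ) • Q)
      = Ring.inverse C * J := by
    rw [hSC, ringInverse_mul_of_isUnit hJu hsum, hinvJ]
  have hEq : J ∘L (((1 - l : ℝ) : ℂ) • Ring.inverse P + ((l : ℝ) : ℂ) • Ring.inverse Q -
      Ring.inverse (((1 - l : ℝ) : ℂ) • P + ((l : ℝ) : ℂ) • Q)) ∘L J
      = J ∘L (((1 - l : ℝ) : ℂ) • Ring.inverse A + ((l : ℝ) : ℂ) • Ring.inverse B -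
        Ring.inverse C) := by
    show J * ((((1 - l : ℝ) : ℂ) • Ring.inverse P + ((l : ℝ) : ℂ) • Ring.inverse Q -
      Ring.inverse (((1 - l : ℝ) : ℂ) • P + ((l : ℝ) : ℂ) • Q)) * J)
      = J * (((1 - l : ℝ) : ℂ) • Ring.inverse A + ((l : ℝ) : ℂ) • Ring.inverse B -
        Ring.inverse C)
    rw [hiP, hiQ, hiS]
    have hfac : (((1 - l : ℝ) : ℂ) • (Ring.inverse A * J) + ((l : ℝ) : ℂ) • (Ring.inverse B * J) -
        Ring.inverse C * J)
        = (((1 - l : ℝ) : ℂ) • Ring.inverse A + ((l : ℝ) : ℂ) • Ring.inverse B -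
          Ring.inverse C) * J := by
      rw [sub_mul, add_mul, smul_mul_assoc, smul_mul_assoc]
    rw [hfac, mul_assoc, hJ2', mul_one]
  rw [hEq] at hconj
  exact hconj
end

section
/- Let (H, J) be a Krein space and let A be a J-positive bounded operator on H, i.e. J ∘ A is a positive operator. Then the spectrum of A is real: every λ in the spectrum of A satisfies λ ∈ ℝ (its imaginary part is zero). -/
open ContinuousLinearMap

/-- The spectrum of a `J`-positive operator on a Krein space `(H, J)` is real. -/
theorem spectrum_of_J_positive_is_real
    {H : Type*} [NormedAddCommGroup H] [InnerProductSpace ℂ H] [CompleteSpace H]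
    (J : H →L[ℂ] H) (hJsa : IsSelfAdjoint J) (hJ2 : J ∘L J = 1)
    (A : H →L[ℂ] H) (hA : (J ∘L A).IsPositive) :
    ∀ lam ∈ spectrum ℂ A, lam.im = 0 := by
  intro lam hlam
  set B : H →L[ℂ] H := J ∘L A with hBdef
  have hB : (0 : H →L[ℂ] H) ≤ B := (nonneg_iff_isPositive B).mpr hA
  have hAeq : A = J * B := by
    show A = J ∘L (J ∘L A)
    rw [← ContinuousLinearMap.comp_assoc, hJ2, ContinuousLinearMap.one_def,
      ContinuousLinearMap.id_comp]
  by_cases h0 : lam = 0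
  · simp [h0]
  · set S : H →L[ℂ] H := CFC.sqrt B with hSdef
    have hSsa : IsSelfAdjoint S := IsSelfAdjoint.of_nonneg (CFC.sqrt_nonneg B)
    have hSS : S * S = B := CFC.sqrt_mul_sqrt_self B hB
    have hCsa : IsSelfAdjoint (S * J * S) := by
      rw [IsSelfAdjoint, star_mul, star_mul, hSsa.star_eq, hJsa.star_eq, mul_assoc]
    have h1 : lam ∈ spectrum ℂ (J * B) \ {0} := by
      rw [← hAeq]; exact ⟨hlam, h0⟩
    have h2 : lam ∈ spectrum ℂ (S * J * S) := by
      have e1 : spectrum ℂ (J * (S * S)) \ {0} = spectrum ℂ ((S * S) * J) \ {0} :=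
        spectrum.nonzero_mul_comm J (S * S)
      have e2 : spectrum ℂ (S * (S * J)) \ {0} = spectrum ℂ ((S * J) * S) \ {0} :=
        spectrum.nonzero_mul_comm S (S * J)
      have h3 : lam ∈ spectrum ℂ (J * (S * S)) \ {0} := by rwa [hSS]
      rw [e1] at h3
      rw [mul_assoc] at h3
      rw [e2] at h3
      exact h3.1
    have := hCsa.mem_spectrum_eq_re h2
    rw [this]; simp
end
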